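/- arXiv:1711.08584 — 2 statements merged into one kernel-verified Lean document; each statement's English description precedes it below -/
import Mathlib

section
/- A lattice path from (0,0) to (n,n) using up steps (0,1) and down steps (1,0) is uniquely determined by the set of coordinates of its peaks, i.e., two such paths with the same set of peak positions are equal (for paths with at least one peak; every nonempty such path has at least one peak). -/
-- A lattice path is a list of steps: `true` = up step `(0,1)`, `false` = down step `(1,0)`.
/-- The number of up steps of `p` that lie strictly below the line `y = x`
(i.e. up steps starting at a point with `y < x`). -/
def upsBelow (p : List Bool) : ℕ :=
  (List.range p.length).countP fun i =>
    p.getD i false && decide ((p.take i).count true < (p.take i).count false)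

/-- `IsNM n m p`: `p` is an `(n,m)`-Dyck path, i.e. a path from `(0,0)` to `(n,n)`
with exactly `m` up steps below the line `y = x`. -/
def IsNM (n m : ℕ) (p : List Bool) : Prop :=
  p.length = 2 * n ∧ p.count true = n ∧ upsBelow p = m

/-- The number of peaks (`UD` factors) of `p`. -/
def peaks (p : List Bool) : ℕ :=
  (List.range (p.length - 1)).countP fun i => p.getD i false && !p.getD (i + 1) true

/-- The number of `(n,m)`-Dyck paths with exactly `k` peaks. -/
noncomputable def pC (n m k : ℕ) : ℕ :=
  Nat.card {p : List Bool // IsNM n m p ∧ peaks p = k}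

/-- The number of `(n,m)`-Dyck paths with exactly `k` peaks whose first step is `a`
and whose last step is `b`. -/
noncomputable def pXY (n m k : ℕ) (a b : Bool) : ℕ :=
  Nat.card {p : List Bool // IsNM n m p ∧ peaks p = k ∧
    p.head? = some a ∧ p.getLast? = some b}
/-- The set of coordinates of peaks of a path `p`: the peak corresponding to an up step
at position `i` immediately followed by a down step is the lattice point (x,y) reached
after the first `i+1` steps. -/
def peakSet (p : List Bool) : Set (ℕ × ℕ) :=
  {q | ∃ i, i + 1 < p.length ∧ p.getD i false = true ∧ p.getD (i + 1) true = false ∧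
    q = ((p.take (i + 1)).count false, (p.take (i + 1)).count true)}
lemma count_true_add_count_false (l : List Bool) : l.count true + l.count false = l.length := by
  induction l with
  | nil => simp
  | cons a t ih => cases a <;> simp [List.count_cons] <;> omega

lemma peakSet_nil : peakSet ([] : List Bool) = ∅ := by
  ext z; simp [peakSet]

lemma mem_peakSet_cons_false (t : List Bool) (z : ℕ × ℕ) :
    z ∈ peakSet (false :: t) ↔ ∃ w ∈ peakSet t, z = (w.1 + 1, w.2) := by
  constructor
  · rintro ⟨i, h1, h2, h3, rfl⟩
    match i with
    | 0 => simp at h2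
    | j + 1 =>
      refine ⟨((t.take (j+1)).count false, (t.take (j+1)).count true), ⟨j, ?_, ?_, ?_, rfl⟩, ?_⟩
      · simpa using h1
      · simpa using h2
      · simpa using h3
      · simp [List.take_succ_cons, List.count_cons]
  · rintro ⟨w, ⟨j, h1, h2, h3, rfl⟩, rfl⟩
    exact ⟨j + 1, by simpa using h1, by simpa using h2, by simpa using h3,
      by simp [List.take_succ_cons, List.count_cons]⟩

lemma mem_peakSet_cons_true (t : List Bool) (z : ℕ × ℕ) :
    z ∈ peakSet (true :: t) ↔
      (z = (0, 1) ∧ t.getD 0 true = false) ∨ ∃ w ∈ peakSet t, z = (w.1, w.2 + 1) := by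
  constructor
  · rintro ⟨i, h1, h2, h3, rfl⟩
    match i with
    | 0 =>
      left
      refine ⟨by simp, by simpa using h3⟩
    | j + 1 =>
      right
      refine ⟨((t.take (j+1)).count false, (t.take (j+1)).count true), ⟨j, ?_, ?_, ?_, rfl⟩, ?_⟩
      · simpa using h1
      · simpa using h2
      · simpa using h3
      · simp [List.take_succ_cons, List.count_cons]
  · rintro (⟨rfl, hh⟩ | ⟨w, ⟨j, h1, h2, h3, rfl⟩, rfl⟩)
    · refine ⟨0, ?_, by simp, by simpa using hh, by simp⟩
      match t with
      | [] => simp at hh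
      | a :: t' => simp
    · exact ⟨j + 1, by simpa using h1, by simpa using h2, by simpa using h3,
        by simp [List.take_succ_cons, List.count_cons]⟩

lemma peak_snd_pos : ∀ (p : List Bool) (z : ℕ × ℕ), z ∈ peakSet p → 1 ≤ z.2 := by
  intro p
  induction p with
  | nil => intro z hz; rw [peakSet_nil] at hz; simp at hz
  | cons b t ih =>
    intro z hz
    cases b
    · obtain ⟨w, hw, rfl⟩ := (mem_peakSet_cons_false t z).mp hz
      exact ih w hw
    · rcases (mem_peakSet_cons_true t z).mp hz with ⟨rfl, -⟩ | ⟨w, hw, rfl⟩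
      · simp
      · simp

lemma exists_fst_zero : ∀ t : List Bool, (peakSet (true :: t)).Nonempty →
    ∃ y, (0, y) ∈ peakSet (true :: t) := by
  intro t
  induction t with
  | nil =>
    intro hne
    obtain ⟨z, i, h1, -⟩ := hne
    simp at h1
  | cons a t' ih =>
    intro hne
    cases a
    · exact ⟨1, (mem_peakSet_cons_true _ _).mpr (Or.inl ⟨rfl, rfl⟩)⟩
    · obtain ⟨z, hz⟩ := hne
      rcases (mem_peakSet_cons_true _ _).mp hz with ⟨-, hh⟩ | ⟨w, hw, -⟩
      · simp at hh
      · obtain ⟨y, hy⟩ := ih ⟨w, hw⟩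
        exact ⟨y + 1, (mem_peakSet_cons_true _ _).mpr (Or.inr ⟨(0, y), hy, rfl⟩)⟩

lemma not_true_false (t s : List Bool) (h : peakSet (true :: t) = peakSet (false :: s)) :
    ¬ (peakSet (true :: t)).Nonempty := by
  intro hne
  obtain ⟨y, hy⟩ := exists_fst_zero t hne
  rw [h] at hy
  obtain ⟨w, -, hw⟩ := (mem_peakSet_cons_false s _).mp hy
  simp [Prod.ext_iff] at hw

lemma eq_rep : ∀ t : List Bool, peakSet t = ∅ →
    t = List.replicate (t.count false) false ++ List.replicate (t.count true) true := by
  intro t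
  induction t with
  | nil => intro _; simp
  | cons b t' ih =>
    intro h
    have ht' : peakSet t' = ∅ := by
      ext w
      simp only [Set.mem_empty_iff_false, iff_false]
      intro hw
      cases b
      · have := (mem_peakSet_cons_false t' _).mpr ⟨w, hw, rfl⟩
        rw [h] at this; exact this
      · have := (mem_peakSet_cons_true t' _).mpr (Or.inr ⟨w, hw, rfl⟩)
        rw [h] at this; exact this
    obtain ⟨a, bb, hab⟩ : ∃ a bb, t' = List.replicate a false ++ List.replicate bb true :=
      ⟨_, _, ih ht'⟩
    cases b
    · subst hab
      simp [List.count_cons, List.count_replicate, List.replicate_succ]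
    · have hhd : t'.getD 0 true ≠ false := by
        intro hf
        have := (mem_peakSet_cons_true t' (0, 1)).mpr (Or.inl ⟨rfl, hf⟩)
        rw [h] at this; exact this
      have ha : a = 0 := by
        match a with
        | 0 => rfl
        | a' + 1 => rw [hab] at hhd; simp [List.replicate_succ] at hhd
      subst ha hab
      simp [List.count_cons, List.count_replicate, List.replicate_succ]

lemma peakSet_determines : ∀ p q : List Bool, p.length = q.length →
    p.count true = q.count true → peakSet p = peakSet q →
    (peakSet p).Nonempty → p = q := by
  intro p
  induction p with
  | nil =>
    intro q _ _ hpq hne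
    rw [peakSet_nil] at hne
    exact absurd hne (by simp)
  | cons b t ih =>
    intro q hlen hcnt hpq hne
    match q with
    | [] => simp at hlen
    | c :: s =>
      have hlen' : t.length = s.length := by simpa using hlen
      have hqne : (peakSet (c :: s)).Nonempty := hpq ▸ hne
      cases b <;> cases c
      · -- false / false
        have hts : peakSet t = peakSet s := by
          ext w
          constructor <;> intro hw
          · have h1 := (mem_peakSet_cons_false t (w.1 + 1, w.2)).mpr ⟨w, hw, rfl⟩
            rw [hpq] at h1
            obtain ⟨w', hw', he⟩ := (mem_peakSet_cons_false s _).mp h1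
            have : w = w' := by
              simp [Prod.ext_iff] at he; exact Prod.ext he.1 he.2
            rwa [this]
          · have h1 := (mem_peakSet_cons_false s (w.1 + 1, w.2)).mpr ⟨w, hw, rfl⟩
            rw [← hpq] at h1
            obtain ⟨w', hw', he⟩ := (mem_peakSet_cons_false t _).mp h1
            have : w = w' := by
              simp [Prod.ext_iff] at he; exact Prod.ext he.1 he.2
            rwa [this]
        have htne : (peakSet t).Nonempty := by
          obtain ⟨z, hz⟩ := hne
          obtain ⟨w, hw, -⟩ := (mem_peakSet_cons_false t _).mp hz
          exact ⟨w, hw⟩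
        have hcnt' : t.count true = s.count true := by simpa [List.count_cons] using hcnt
        rw [ih s hlen' hcnt' hts htne]
      · -- false / true : contradiction
        exact absurd (hpq ▸ hne) (not_true_false s t hpq.symm)
      · -- true / false : contradiction
        exact absurd hne (not_true_false t s hpq)
      · -- true / true
        have hts : peakSet t = peakSet s := by
          ext w
          constructor <;> intro hw
          · have hw2 := peak_snd_pos t w hw
            have h1 := (mem_peakSet_cons_true t (w.1, w.2 + 1)).mpr (Or.inr ⟨w, hw, rfl⟩)
            rw [hpq] at h1
            rcases (mem_peakSet_cons_true s _).mp h1 with ⟨he, -⟩ | ⟨w', hw', he⟩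
            · simp [Prod.ext_iff] at he; omega
            · have : w = w' := by
                simp [Prod.ext_iff] at he; exact Prod.ext he.1 he.2
              rwa [this]
          · have hw2 := peak_snd_pos s w hw
            have h1 := (mem_peakSet_cons_true s (w.1, w.2 + 1)).mpr (Or.inr ⟨w, hw, rfl⟩)
            rw [← hpq] at h1
            rcases (mem_peakSet_cons_true t _).mp h1 with ⟨he, -⟩ | ⟨w', hw', he⟩
            · simp [Prod.ext_iff] at he; omega
            · have : w = w' := by
                simp [Prod.ext_iff] at he; exact Prod.ext he.1 he.2
              rwa [this]
        have hcnt' : t.count true = s.count true := by simpa [List.count_cons] using hcnt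
        by_cases hE : peakSet t = ∅
        · have hsE : peakSet s = ∅ := hts ▸ hE
          have hcf : t.count false = s.count false := by
            have h1 := count_true_add_count_false t
            have h2 := count_true_add_count_false s
            omega
          rw [eq_rep t hE, eq_rep s hsE, hcnt', hcf]
        · have htne : (peakSet t).Nonempty := Set.nonempty_iff_ne_empty.mpr hE
          rw [ih s hlen' hcnt' hts htne]


/-- A lattice path from `(0,0)` to `(n,n)` with at least one peak is uniquely determined
by the set of coordinates of its peaks. -/
theorem stmt_11 (n : ℕ) (hn : 1 ≤ n) (p q : List Bool)
    (hp : p.length = 2 * n ∧ p.count true = n)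
    (hq : q.length = 2 * n ∧ q.count true = n)
    (hne : (peakSet p).Nonempty) (h : peakSet p = peakSet q) : p = q := by
  exact peakSet_determines p q (by rw [hp.1, hq.1]) (by rw [hp.2, hq.2]) h hne
end

section
/- For integers n ≥ 1, 0 ≤ m ≤ n, and 0 ≤ k ≤ n-1, the number of (n,m)-Dyck paths with exactly k double ascents equals the number of (n,m)-Dyck paths with exactly k double descents. -/
/-- The number of double ascents (`UU` factors) of `p`. -/
def doubleAscents (p : List Bool) : ℕ :=
  (List.range (p.length - 1)).countP fun i => p.getD i false && p.getD (i + 1) false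

/-- The number of double descents (`DD` factors) of `p`. -/
def doubleDescents (p : List Bool) : ℕ :=
  (List.range (p.length - 1)).countP fun i => !p.getD i true && !p.getD (i + 1) true

def dyckRev (p : List Bool) : List Bool := (p.map not).reverse

def dB (p : List Bool) : ℕ :=
  (List.range p.length).countP fun i =>
    !(p.getD i true) && decide ((p.take (i+1)).count true < (p.take (i+1)).count false)

def rD (p : List Bool) : ℕ :=
  (List.range p.length).countP fun i =>
    !(p.getD i true) && decide ((p.drop (i+1)).count false < (p.drop (i+1)).count true)

lemma dyckRev_dyckRev (p : List Bool) : dyckRev (dyckRev p) = p := by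
  simp [dyckRev, List.map_reverse, List.map_map, Function.comp_def]

lemma count_map_not (p : List Bool) (b : Bool) : (p.map not).count b = p.count (!b) := by
  induction p with
  | nil => simp
  | cons a p ih => cases a <;> cases b <;> simp [List.count_cons, ih]

lemma count_dyckRev_true (p : List Bool) : (dyckRev p).count true = p.count false := by
  simp [dyckRev, List.count_reverse, count_map_not]

lemma count_dyckRev_false (p : List Bool) : (dyckRev p).count false = p.count true := by
  simp [dyckRev, List.count_reverse, count_map_not]

lemma count_tf (p : List Bool) : p.count true + p.count false = p.length := by
  induction p with
  | nil => simp
  | cons a p ih => cases a <;> simp [List.count_cons] <;> omega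

lemma upsBelow_append (p : List Bool) (a : Bool) :
    upsBelow (p ++ [a]) = upsBelow p +
      if a = true ∧ p.count true < p.count false then 1 else 0 := by
  unfold upsBelow
  rw [show (p ++ [a]).length = p.length + 1 by simp, List.range_succ, List.countP_append]
  congr 1
  · apply List.countP_congr
    intro i hi
    simp only [List.mem_range] at hi
    rw [List.getD_append _ _ _ _ hi, List.take_append_of_le_length hi.le]
  · have h1 : (p ++ [a]).getD p.length false = a := by
      rw [List.getD_append_right _ _ _ _ le_rfl]; simp
    have h2 : (p ++ [a]).take p.length = p := by
      rw [List.take_append_of_le_length le_rfl, List.take_length]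
    simp only [List.countP_cons, List.countP_nil, h1, h2, Nat.zero_add]
    cases a <;> by_cases h : p.count true < p.count false <;> simp [h]

lemma dB_append (p : List Bool) (a : Bool) :
    dB (p ++ [a]) = dB p +
      if a = false ∧ p.count true < p.count false + 1 then 1 else 0 := by
  unfold dB
  rw [show (p ++ [a]).length = p.length + 1 by simp, List.range_succ, List.countP_append]
  congr 1
  · apply List.countP_congr
    intro i hi
    simp only [List.mem_range] at hi
    rw [List.getD_append _ _ _ _ hi, List.take_append_of_le_length hi]
  · have h1 : (p ++ [a]).getD p.length true = a := by
      rw [List.getD_append_right _ _ _ _ le_rfl]; simp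
    have h2 : (p ++ [a]).take (p.length + 1) = p ++ [a] := by
      apply List.take_of_length_le; simp
    simp only [List.countP_cons, List.countP_nil, h1, h2, Nat.zero_add,
      List.count_append, List.count_cons, List.count_nil]
    cases a <;> by_cases h : p.count true < p.count false + 1 <;>
      simp [h] <;> omega

lemma key (p : List Bool) :
    (upsBelow p : ℤ) = dB p + min ((p.count true : ℤ) - p.count false) 0 := by
  induction p using List.reverseRecOn with
  | nil => simp [upsBelow, dB]
  | append_singleton p a ih =>
    rw [upsBelow_append, dB_append, List.count_append, List.count_append]
    cases a <;>
      simp only [List.count_cons, List.count_nil, Bool.false_eq_true, if_false, if_true,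
        Bool.true_eq_false, Nat.add_zero, Nat.zero_add, and_true, and_false, true_and,
        false_and, reduceIte] <;>
      by_cases h : p.count true < p.count false <;>
      by_cases h' : p.count true < p.count false + 1 <;>
      simp [h, h'] <;> push_cast <;> omega

lemma upsBelow_dyckRev (p : List Bool) : upsBelow (dyckRev p) = rD p := by
  induction p with
  | nil => rfl
  | cons a p ih =>
    have hq : dyckRev (a :: p) = dyckRev p ++ [!a] := by simp [dyckRev]
    rw [hq, upsBelow_append, ih, count_dyckRev_true, count_dyckRev_false]
    unfold rD
    rw [show (a :: p).length = p.length + 1 from rfl, List.range_succ_eq_map,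
      List.countP_cons, List.countP_map]
    congr 1
    cases a <;> by_cases h : p.count false < p.count true <;> simp [h]

lemma rD_eq_dB (p : List Bool) (h : p.count true = p.count false) : rD p = dB p := by
  unfold rD dB
  apply List.countP_congr
  intro i hi
  have h1 : (p.take (i+1)).count true + (p.drop (i+1)).count true = p.count true := by
    rw [← List.count_append, List.take_append_drop]
  have h2 : (p.take (i+1)).count false + (p.drop (i+1)).count false = p.count false := by
    rw [← List.count_append, List.take_append_drop]
  simp only [Bool.and_eq_true, decide_eq_true_eq]
  constructor <;> rintro ⟨ha, hb⟩ <;> exact ⟨ha, by omega⟩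

lemma upsBelow_dyckRev_eq (p : List Bool) (h : p.count true = p.count false) :
    upsBelow (dyckRev p) = upsBelow p := by
  have h1 := key p
  rw [upsBelow_dyckRev, rD_eq_dB p h]
  rw [h] at h1
  simp only [sub_self, min_self] at h1
  omega

lemma dA_cons (a : Bool) (p : List Bool) :
    doubleAscents (a :: p) = doubleAscents p +
      if a = true ∧ p.getD 0 false = true then 1 else 0 := by
  cases p with
  | nil => cases a <;> simp [doubleAscents]
  | cons b t =>
    unfold doubleAscents
    rw [show (a :: b :: t).length - 1 = ((b :: t).length - 1) + 1 by simp,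
      List.range_succ_eq_map, List.countP_cons, List.countP_map]
    congr 1
    cases a <;> cases b <;> simp

lemma dD_append (p : List Bool) (a : Bool) :
    doubleDescents (p ++ [a]) = doubleDescents p +
      if p.getD (p.length - 1) true = false ∧ a = false then 1 else 0 := by
  cases p with
  | nil => cases a <;> simp [doubleDescents]
  | cons b t =>
    set p := b :: t with hp
    unfold doubleDescents
    rw [show (p ++ [a]).length - 1 = (p.length - 1) + 1 by simp [hp],
      List.range_succ, List.countP_append]
    have hlen : p.length - 1 < p.length := by simp [hp]
    congr 1
    · apply List.countP_congr
      intro i hi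
      simp only [List.mem_range] at hi
      have hi1 : i < p.length := by omega
      have hi2 : i + 1 < p.length := by omega
      rw [List.getD_append _ _ _ _ hi1, List.getD_append _ _ _ _ hi2]
    · have h1 : (p ++ [a]).getD (p.length - 1) true = p.getD (p.length - 1) true :=
        List.getD_append _ _ _ _ hlen
      have h2 : (p ++ [a]).getD (p.length - 1 + 1) true = a := by
        rw [show p.length - 1 + 1 = p.length by omega,
          List.getD_append_right _ _ _ _ le_rfl]
        simp
      simp only [List.countP_cons, List.countP_nil, h1, h2, Nat.zero_add]
      cases a <;> cases h : p.getD (p.length - 1) true <;> simp [h]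

lemma dyckRev_getD_last (p : List Bool) :
    (dyckRev p).getD (p.length - 1) true = !(p.getD 0 false) := by
  cases p with
  | nil => rfl
  | cons b t =>
    have hq : dyckRev (b :: t) = dyckRev t ++ [!b] := by simp [dyckRev]
    have hl : (dyckRev t).length = t.length := by simp [dyckRev]
    rw [hq, show (b :: t).length - 1 = (dyckRev t).length by simp [hl],
      List.getD_append_right _ _ _ _ le_rfl]
    simp

lemma dD_dyckRev (p : List Bool) : doubleDescents (dyckRev p) = doubleAscents p := by
  induction p with
  | nil => rfl
  | cons a p ih =>
    have hq : dyckRev (a :: p) = dyckRev p ++ [!a] := by simp [dyckRev]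
    have hl : (dyckRev p).length = p.length := by simp [dyckRev]
    rw [hq, dD_append, ih, dA_cons, hl, dyckRev_getD_last]
    cases a <;> cases h0 : p.getD 0 false <;> simp [h0]

lemma isNM_dyckRev {n m : ℕ} {p : List Bool} (h : IsNM n m p) : IsNM n m (dyckRev p) := by
  obtain ⟨h1, h2, h3⟩ := h
  have hf : p.count false = n := by have := count_tf p; omega
  have hb : p.count true = p.count false := by rw [h2, hf]
  refine ⟨by simp [dyckRev, h1], by rw [count_dyckRev_true, hf], ?_⟩
  rw [upsBelow_dyckRev_eq p hb, h3]


/-- `a_{n,m,k} = d_{n,m,k}`: the number of `(n,m)`-Dyck paths with `k` double ascents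
equals the number of `(n,m)`-Dyck paths with `k` double descents. -/
theorem stmt_16 (n m k : ℕ) (hn : 1 ≤ n) (hm : m ≤ n) (hk : k ≤ n - 1) :
    Nat.card {p : List Bool // IsNM n m p ∧ doubleAscents p = k} =
      Nat.card {p : List Bool // IsNM n m p ∧ doubleDescents p = k} := by
  apply Nat.card_congr
  refine ⟨fun x => ⟨dyckRev x.1, isNM_dyckRev x.2.1, by rw [dD_dyckRev]; exact x.2.2⟩,
    fun x => ⟨dyckRev x.1, isNM_dyckRev x.2.1, ?_⟩,
    fun x => Subtype.ext (dyckRev_dyckRev x.1),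
    fun x => Subtype.ext (dyckRev_dyckRev x.1)⟩
  have h := dD_dyckRev (dyckRev x.1)
  rw [dyckRev_dyckRev] at h
  rw [← h] at *
  exact x.2.2
end
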